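/- arXiv:1909.13850 — 2 statements merged into one kernel-verified Lean document; each statement's English description precedes it below -/
import Mathlib

section
/- Let K be a pure d-dimensional simplicial complex and suppose there is a set F of facets of K such that K ∖ F is collapsible. Then |F| = β̃_d(K;ℤ₂), β̃_i(K;ℤ₂) = 0 for all i with 0 ≤ i ≤ d−1, and consequently the reduced Euler characteristic satisfies χ̃(K) = (−1)^d · β̃_d(K;ℤ₂). -/
/-! Common definitions: finite abstract simplicial complexes, links, stars,
barycentric subdivision, joins, collapsibility, shellability, vertex
decomposability, star decomposability (also "in vertices"), and simplicial
homology (reduced, over ℤ and ℤ₂). -/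

namespace Paper

open Finset

variable {V : Type*} [DecidableEq V]

/-- `K` is a (finite, abstract) simplicial complex: downward closed family of finsets. -/
def IsCplx (K : Finset (Finset V)) : Prop :=
  ∀ σ ∈ K, ∀ τ ⊆ σ, τ ∈ K

/-- Vertex set of a complex. -/
def verts (K : Finset (Finset V)) : Finset V := K.sup id

/-- Dimension of a complex (as an integer; `-1` for `∅` and `{∅}`). -/
def dim (K : Finset (Finset V)) : ℤ := ((K.sup Finset.card : ℕ) : ℤ) - 1

/-- The facets (inclusion-maximal faces) of `K`. -/
def facets (K : Finset (Finset V)) : Finset (Finset V) :=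
  K.filter fun σ => ∀ τ ∈ K, σ ⊆ τ → σ = τ

/-- `K` is pure `d`-dimensional: it is nonempty, every face has dimension at most `d`
and every face is contained in a face of dimension exactly `d`. -/
def PureDim (K : Finset (Finset V)) (d : ℤ) : Prop :=
  K.Nonempty ∧ (∀ σ ∈ K, (σ.card : ℤ) ≤ d + 1) ∧
    ∀ σ ∈ K, ∃ τ ∈ K, σ ⊆ τ ∧ (τ.card : ℤ) = d + 1

/-- Link of a face. -/
def lk (σ : Finset V) (K : Finset (Finset V)) : Finset (Finset V) :=
  (K.filter fun τ => σ ⊆ τ).image fun τ => τ \ σ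

/-- Closed star of a face. -/
def star (σ : Finset V) (K : Finset (Finset V)) : Finset (Finset V) :=
  K.filter fun τ => τ ∪ σ ∈ K

/-- Union of the closed stars of a set of vertices. -/
def starSet (S : Finset V) (K : Finset (Finset V)) : Finset (Finset V) :=
  K.filter fun τ => ∃ v ∈ S, τ ∪ {v} ∈ K

/-- Subcomplex induced on a vertex set `S`. -/
def induced (S : Finset V) (K : Finset (Finset V)) : Finset (Finset V) :=
  K.filter fun σ => σ ⊆ S

/-- Deletion of a vertex:  `K - v`. -/
def deleteV (v : V) (K : Finset (Finset V)) : Finset (Finset V) :=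
  K.filter fun σ => v ∉ σ

/-- The full simplex on vertex set `σ`. -/
def simplexCplx (σ : Finset V) : Finset (Finset V) := σ.powerset

/-- The boundary `∂σ` of the simplex on `σ`: all proper subsets of `σ`. -/
def bdSimplex (σ : Finset V) : Finset (Finset V) := σ.powerset.erase σ

/-- Barycentric subdivision: vertices are the nonempty faces of `K`, faces are
chains of nonempty faces of `K`. -/
def sd (K : Finset (Finset V)) : Finset (Finset (Finset V)) :=
  if K = ∅ then ∅ else
    K.powerset.filter fun c => (∅ ∉ c) ∧ ∀ σ ∈ c, ∀ τ ∈ c, σ ⊆ τ ∨ τ ⊆ σ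

/-- Join of two simplicial complexes (on the disjoint union of vertex types). -/
def join {α β : Type*} [DecidableEq α] [DecidableEq β]
    (X : Finset (Finset α)) (Y : Finset (Finset β)) : Finset (Finset (α ⊕ β)) :=
  (X ×ˢ Y).image fun p => p.1.image Sum.inl ∪ p.2.image Sum.inr

/-- `K'` arises from `K` by an elementary collapse: remove a free face `σ`
together with the unique face `τ` properly containing it. -/
def ElemCollapse (K K' : Finset (Finset V)) : Prop :=
  ∃ σ ∈ K, ∃ τ ∈ K, σ ⊂ τ ∧ (∀ ρ ∈ K, σ ⊂ ρ → ρ = τ) ∧ K' = (K.erase σ).erase τ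

/-- `K` collapses to `K'`. -/
def CollapsesTo (K K' : Finset (Finset V)) : Prop :=
  Relation.ReflTransGen ElemCollapse K K'

/-- `K` is collapsible: it collapses to a single vertex. -/
def Collapsible (K : Finset (Finset V)) : Prop :=
  ∃ w : V, CollapsesTo K ({∅, {w}} : Finset (Finset V))

/-- The removal-collapsibility condition: `K` is empty, or becomes collapsible
after removal of a set of facets. -/
def RC (K : Finset (Finset V)) : Prop :=
  K = ∅ ∨ ∃ F ⊆ facets K, Collapsible (K \ F)

/-- The hereditary removal-collapsibility condition: the link of every face
(including the empty face, whose link is `K` itself) satisfies (RC). -/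
def HRC (K : Finset (Finset V)) : Prop :=
  ∀ σ ∈ K, RC (lk σ K)

/-- `K` is shellable: there is a total order of its facets such that each facet
meets the union of the previous ones in a pure complex of codimension one. -/
def Shellable (K : Finset (Finset V)) : Prop :=
  ∃ L : List (Finset V), L.Nodup ∧ L.toFinset = facets K ∧
    ∀ i : ℕ, (hi : i < L.length) → 1 ≤ i →
      PureDim ((L.get ⟨i, hi⟩).powerset ∩ ((L.take i).map Finset.powerset).foldr (· ∪ ·) ∅)
        (((L.get ⟨i, hi⟩).card : ℤ) - 2)

/-- Vertex decomposability (Provan–Billera) of a pure complex. -/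
inductive VD : Finset (Finset V) → Prop
  | simplex (σ : Finset V) : VD σ.powerset
  | shed (K : Finset (Finset V)) (v : V) (hv : {v} ∈ K)
      (hdel : PureDim (deleteV v K) (dim K)) (hVDdel : VD (deleteV v K))
      (hlk : PureDim (lk {v} K) (dim K - 1)) (hVDlk : VD (lk {v} K)) : VD K

/-- `L` is a shedding order of `K` (a total order on `V(K)`, given as a
duplicate-free list, witnessing vertex decomposability; once a simplex is
reached, an arbitrary order of its vertices qualifies). -/
inductive SheddingOrder : List V → Finset (Finset V) → Prop
  | simplex (σ : Finset V) (L : List V) (hnd : L.Nodup) (hfin : L.toFinset = σ) :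
      SheddingOrder L σ.powerset
  | cons (v : V) (L : List V) (K : Finset (Finset V)) (hv : {v} ∈ K) (hvL : v ∉ L)
      (hcov : insert v L.toFinset = verts K)
      (hdel : PureDim (deleteV v K) (dim K))
      (hrest : SheddingOrder L (deleteV v K))
      (hlk : PureDim (lk {v} K) (dim K - 1)) (hVDlk : VD (lk {v} K)) :
      SheddingOrder (v :: L) K

/-- `W` induces a star partition of `X`: the stars of the vertices of `W`
cover `X` and no two distinct vertices of `W` lie in a common face. -/
def StarPartition (W : Finset V) (X : Finset (Finset V)) : Prop :=
  (∀ σ ∈ X, ∃ w ∈ W, σ ∪ {w} ∈ X) ∧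
    ∀ w₁ ∈ W, ∀ w₂ ∈ W, w₁ ≠ w₂ → ¬∃ σ ∈ X, w₁ ∈ σ ∧ w₂ ∈ σ

/-- The overlap `O_X(x, W') = lk(x,X) ∩ st(W',X)`. -/
def overlap (X : Finset (Finset V)) (x : V) (W' : Finset V) : Finset (Finset V) :=
  lk {x} X ∩ starSet W' X

/-- Star decomposability of the pair `(X, X₀)`.  The total order on the set `W`
inducing the star partition is encoded as a duplicate-free list `L` (earlier in
the list = smaller in the order). -/
inductive StarDec : Finset (Finset V) → Finset V → Prop
  | base : StarDec ({∅} : Finset (Finset V)) (∅ : Finset V)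
  | step (X : Finset (Finset V)) (X₀ : Finset V) (k : ℤ) (hk : 0 ≤ k) (hpure : PureDim X k)
      (L : List V) (hne : L ≠ []) (hnd : L.Nodup) (hsub : L.toFinset ⊆ verts X)
      (hsp : StarPartition L.toFinset X)
      (horder : ∃ i < L.length, X₀ = (L.drop i).toFinset)
      (U : ℕ → Finset V)
      (hUne : ∀ i, i + 1 < L.length → (U i).Nonempty)
      (hUsub : ∀ i, (hi : i + 1 < L.length) →
        U i ⊆ verts (lk {L.get ⟨i, Nat.lt_of_succ_lt hi⟩} X))
      (hUst : ∀ i, (hi : i + 1 < L.length) →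
        starSet (U i) (lk {L.get ⟨i, Nat.lt_of_succ_lt hi⟩} X) =
          overlap X (L.get ⟨i, Nat.lt_of_succ_lt hi⟩) ((L.drop (i + 1)).toFinset))
      (hlink : ∀ i, (hi : i + 1 < L.length) →
        StarDec (lk {L.get ⟨i, Nat.lt_of_succ_lt hi⟩} X) (U i))
      (Ulast : Finset V)
      (hlast : StarDec (lk {L.getLast hne} X) Ulast) :
      StarDec X X₀

/-- The order encoded by the list `L` induces a star decomposition of `(X, X₀)`. -/
def InducesStarDecomp (L : List V) (X : Finset (Finset V)) (X₀ : Finset V) : Prop :=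
  (L = [] ∧ X = ({∅} : Finset (Finset V)) ∧ X₀ = ∅) ∨
  ∃ hne : L ≠ [], L.Nodup ∧ StarPartition L.toFinset X ∧
    (∃ i < L.length, X₀ = (L.drop i).toFinset) ∧
    (∀ i, (hi : i + 1 < L.length) →
      ∃ U : Finset V, U.Nonempty ∧ U ⊆ verts (lk {L.get ⟨i, Nat.lt_of_succ_lt hi⟩} X) ∧
        starSet U (lk {L.get ⟨i, Nat.lt_of_succ_lt hi⟩} X) =
          overlap X (L.get ⟨i, Nat.lt_of_succ_lt hi⟩) ((L.drop (i + 1)).toFinset) ∧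
        StarDec (lk {L.get ⟨i, Nat.lt_of_succ_lt hi⟩} X) U) ∧
    (∃ U : Finset V, StarDec (lk {L.getLast hne} X) U)

/-- Star decomposability *in vertices* of the pair `(sd Y, Y₀)`; the data is the
underlying complex `Y` together with `Y₀ ⊆ V(Y)`.  The total order on `V(Y)` is
encoded as a duplicate-free list `L`. -/
inductive StarDecV : Finset (Finset V) → Finset V → Prop
  | base : StarDecV ({∅} : Finset (Finset V)) (∅ : Finset V)
  | step (Y : Finset (Finset V)) (Y₀ : Finset V) (k : ℤ) (hk : 0 ≤ k) (hpure : PureDim Y k)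
      (L : List V) (hne : L ≠ []) (hnd : L.Nodup) (hV : L.toFinset = verts Y)
      (horder : ∃ i < L.length, Y₀ = (L.drop i).toFinset)
      (hlink : ∀ i, (hi : i + 1 < L.length) →
        StarDecV (lk {L.get ⟨i, Nat.lt_of_succ_lt hi⟩} Y)
          (verts (lk {L.get ⟨i, Nat.lt_of_succ_lt hi⟩} Y) ∩ (L.drop (i + 1)).toFinset))
      (hlast : StarDecV (lk {L.getLast hne} Y) (verts (lk {L.getLast hne} Y))) :
      StarDecV Y Y₀

/-- The order encoded by the list `L` induces a star decomposition of
`(sd Y, Y₀)` in vertices. -/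
def InducesStarDecompV (L : List V) (Y : Finset (Finset V)) (Y₀ : Finset V) : Prop :=
  (L = [] ∧ Y = ({∅} : Finset (Finset V)) ∧ Y₀ = ∅) ∨
  ∃ hne : L ≠ [], L.Nodup ∧ L.toFinset = verts Y ∧
    (∃ i < L.length, Y₀ = (L.drop i).toFinset) ∧
    (∀ i, (hi : i + 1 < L.length) →
      StarDecV (lk {L.get ⟨i, Nat.lt_of_succ_lt hi⟩} Y)
        (verts (lk {L.get ⟨i, Nat.lt_of_succ_lt hi⟩} Y) ∩ (L.drop (i + 1)).toFinset)) ∧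
    StarDecV (lk {L.getLast hne} Y) (verts (lk {L.getLast hne} Y))

/-- Simplicial isomorphism between two complexes. -/
def SimpIso {α β : Type*} [DecidableEq α] [DecidableEq β]
    (K : Finset (Finset α)) (L : Finset (Finset β)) : Prop :=
  ∃ f : α → β, Set.InjOn f ↑(verts K) ∧ K.image (fun σ => σ.image f) = L

/-- Simplicial isomorphism of pairs (complex, subcomplex). -/
def SimpIsoPair {α β : Type*} [DecidableEq α] [DecidableEq β]
    (K K₁ : Finset (Finset α)) (L L₁ : Finset (Finset β)) : Prop :=
  ∃ f : α → β, Set.InjOn f ↑(verts K) ∧ K.image (fun σ => σ.image f) = L ∧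
    K₁.image (fun σ => σ.image f) = L₁

/-! Reduced simplicial homology (the empty face is included, so the chain
complex below, graded by cardinality of faces, computes *reduced* homology). -/

/-- Faces of `K` of cardinality `n`. -/
def kfaces (K : Finset (Finset V)) (n : ℕ) : Finset (Finset V) :=
  K.filter fun σ => σ.card = n

/-- The mod 2 boundary operator, from chains on faces of cardinality `n+1`
to chains on faces of cardinality `n`. -/
noncomputable def bdry2 (K : Finset (Finset V)) (n : ℕ) :
    (↥(kfaces K (n + 1)) → ZMod 2) →ₗ[ZMod 2] (↥(kfaces K n) → ZMod 2) :=
  Matrix.mulVecLin (Matrix.of fun (τ : ↥(kfaces K n)) (σ : ↥(kfaces K (n + 1))) =>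
    if (τ : Finset V) ⊆ (σ : Finset V) then (1 : ZMod 2) else 0)

/-- The reduced Betti number `β̃ᵢ(K; ℤ₂)`. -/
noncomputable def betti2 (K : Finset (Finset V)) (i : ℕ) : ℕ :=
  Module.finrank (ZMod 2) (LinearMap.ker (bdry2 K i)) -
    Module.finrank (ZMod 2) (LinearMap.range (bdry2 K (i + 1)))

/-- Signed incidence coefficient (with respect to an arbitrary, but fixed,
linear order on the vertices; reduced homology does not depend on the choice). -/
noncomputable def coeffInt (σ τ : Finset V) : ℤ :=
  letI : LinearOrder V := IsWellOrder.linearOrder WellOrderingRel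
  (σ \ τ).sum fun v => (-1 : ℤ) ^ ((σ.filter fun u => u < v).card)

/-- The integral boundary operator, from chains on faces of cardinality `n+1`
to chains on faces of cardinality `n`. -/
noncomputable def bdryZ (K : Finset (Finset V)) (n : ℕ) :
    (↥(kfaces K (n + 1)) → ℤ) →ₗ[ℤ] (↥(kfaces K n) → ℤ) :=
  Matrix.mulVecLin (Matrix.of fun (τ : ↥(kfaces K n)) (σ : ↥(kfaces K (n + 1))) =>
    if (τ : Finset V) ⊆ (σ : Finset V) then coeffInt (σ : Finset V) (τ : Finset V) else 0)

/-- `K` has trivial reduced (integral) homology: `H̃ₙ(K; ℤ) = 0` for all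
`n ≥ -1`. -/
def TrivialRedHomology (K : Finset (Finset V)) : Prop :=
  K.Nonempty ∧ LinearMap.range (bdryZ K 0) = ⊤ ∧
    ∀ n : ℕ, LinearMap.ker (bdryZ K n) = LinearMap.range (bdryZ K (n + 1))

/-- Reduced Euler characteristic. -/
def redEuler (K : Finset (Finset V)) : ℤ :=
  (∑ σ ∈ K.filter fun σ => σ ≠ ∅, (-1 : ℤ) ^ (σ.card - 1)) - 1


/-! ### Auxiliary machinery for the proof of Statement 15 -/

section RCproof

/-- Column of the mod-2 boundary matrix: the indicator of `a ⊆ s`. -/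
noncomputable def colF (A : Finset (Finset V)) (s : Finset V) : (↥A → ZMod 2) :=
  fun a => if (a : Finset V) ⊆ s then 1 else 0

/-- Boundary operator, depending only on the two face finsets. -/
noncomputable def bd (A B : Finset (Finset V)) : (↥B → ZMod 2) →ₗ[ZMod 2] (↥A → ZMod 2) :=
  Matrix.mulVecLin (Matrix.of fun (a : ↥A) (b : ↥B) =>
    if (a : Finset V) ⊆ (b : Finset V) then (1 : ZMod 2) else 0)

lemma bdry2_eq_bd (K : Finset (Finset V)) (n : ℕ) :
    bdry2 K n = bd (kfaces K n) (kfaces K (n + 1)) := rfl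

/-- Rank of `bd A B`. -/
noncomputable def rk (A B : Finset (Finset V)) : ℕ :=
  Module.finrank (ZMod 2) (Submodule.span (ZMod 2) (colF A '' (B : Set (Finset V))))

lemma range_bd (A B : Finset (Finset V)) :
    LinearMap.range (bd A B) = Submodule.span (ZMod 2) (colF A '' (B : Set (Finset V))) := by
  rw [bd, Matrix.range_mulVecLin]
  have h : (Matrix.of fun (a : ↥A) (b : ↥B) =>
      if (a : Finset V) ⊆ (b : Finset V) then (1 : ZMod 2) else 0).col
      = colF A ∘ (Subtype.val : ↥B → Finset V) := rfl
  rw [h, Set.range_comp]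
  congr 1
  simp

lemma finrank_range_bdry2 (K : Finset (Finset V)) (n : ℕ) :
    Module.finrank (ZMod 2) (LinearMap.range (bdry2 K n)) = rk (kfaces K n) (kfaces K (n + 1)) := by
  rw [bdry2_eq_bd, range_bd]; rfl

/-- Parity lemma: the number of `(k+1)`-subsets of a `(k+2)`-set containing a fixed
`k`-set is even. -/
lemma parity_sum (a t : Finset V) (h : a.card + 2 = t.card) :
    ∑ s ∈ t.powersetCard (a.card + 1), (if a ⊆ s then (1 : ZMod 2) else 0) = 0 := by
  rw [Finset.sum_boole]
  rw [ZMod.natCast_eq_zero_iff]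
  by_cases hat : a ⊆ t
  · have himg : (t.powersetCard (a.card + 1)).filter (fun s => a ⊆ s)
        = (t \ a).image (fun v => t.erase v) := by
      ext s
      simp only [Finset.mem_filter, Finset.mem_powersetCard, Finset.mem_image,
        Finset.mem_sdiff]
      constructor
      · rintro ⟨⟨hst, hcard⟩, has⟩
        have hs : (t \ s).card = 1 := by
          rw [Finset.card_sdiff_of_subset hst]; omega
        obtain ⟨v, hv⟩ := Finset.card_eq_one.mp hs
        have hvt : v ∈ t ∧ v ∉ s := by
          have := Finset.mem_sdiff.mp (hv ▸ Finset.mem_singleton_self v)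
          exact this
        refine ⟨v, ⟨hvt.1, fun hva => hvt.2 (has hva)⟩, ?_⟩
        apply Finset.eq_of_subset_of_card_le
        · intro x hx
          have hxt := Finset.mem_of_mem_erase hx
          by_contra hxs
          have : x ∈ t \ s := Finset.mem_sdiff.mpr ⟨hxt, hxs⟩
          rw [hv] at this
          exact (Finset.ne_of_mem_erase hx) (Finset.mem_singleton.mp this)
        · rw [Finset.card_erase_of_mem hvt.1]; omega
      · rintro ⟨v, ⟨hvt, hva⟩, rfl⟩
        refine ⟨⟨Finset.erase_subset _ _, ?_⟩, fun x hx => Finset.mem_erase.mpr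
          ⟨fun hxv => hva (hxv ▸ hx), hat hx⟩⟩
        rw [Finset.card_erase_of_mem hvt]; omega
    rw [himg, Finset.card_image_of_injOn, Finset.card_sdiff_of_subset hat]
    · omega
    · intro x hx y hy hxy
      by_contra hne
      have hxt := (Finset.mem_sdiff.mp hx).1
      have : x ∈ t.erase y := Finset.mem_erase.mpr ⟨hne, hxt⟩
      simp only [] at hxy
      rw [← hxy] at this
      exact (Finset.notMem_erase x t) this
  · have : (t.powersetCard (a.card + 1)).filter (fun s => a ⊆ s) = ∅ := by
      rw [Finset.filter_eq_empty_iff]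
      intro s hs has
      exact hat (has.trans (Finset.mem_powersetCard.mp hs).1)
    rw [this]; simp

lemma bd_colF (A B : Finset (Finset V)) (n : ℕ) (hA : ∀ x ∈ A, x.card = n)
    (hB : ∀ x ∈ B, x.card = n + 1) (ρ : Finset V) (hρ : ρ.card = n + 2)
    (hfull : ∀ s ⊆ ρ, s.card = n + 1 → s ∈ B) :
    bd A B (colF B ρ) = 0 := by
  funext a
  have ha : (a : Finset V).card = n := hA _ a.2
  have h0 : (bd A B) (colF B ρ) a
      = ∑ b : ↥B, (if (a : Finset V) ⊆ (b : Finset V) then (1 : ZMod 2) else 0) * colF B ρ b :=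
    rfl
  have h2 : ∀ b : ↥B, (if (a : Finset V) ⊆ (b : Finset V) then (1 : ZMod 2) else 0) * colF B ρ b
      = (fun s : Finset V => if (a : Finset V) ⊆ s ∧ s ⊆ ρ then (1 : ZMod 2) else 0) (b : Finset V) := by
    intro b
    simp only [colF]
    split_ifs with h1 h2 h3 h3 <;> simp_all
  have h3 : (bd A B) (colF B ρ) a
      = ∑ s ∈ B, (fun s : Finset V => if (a : Finset V) ⊆ s ∧ s ⊆ ρ then (1 : ZMod 2) else 0) s := by
    rw [h0, Finset.sum_congr rfl (fun b _ => h2 b)]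
    exact Finset.sum_coe_sort B (fun s => if (a : Finset V) ⊆ s ∧ s ⊆ ρ then (1 : ZMod 2) else 0)
  have hsub : ρ.powersetCard (n + 1) ⊆ B := by
    intro s hs
    obtain ⟨h1, h2⟩ := Finset.mem_powersetCard.mp hs
    exact hfull s h1 h2
  have h4 : ∑ s ∈ B, (if (a : Finset V) ⊆ s ∧ s ⊆ ρ then (1 : ZMod 2) else 0)
      = ∑ s ∈ ρ.powersetCard (n + 1), (if (a : Finset V) ⊆ s ∧ s ⊆ ρ then (1 : ZMod 2) else 0) := by
    refine (Finset.sum_subset hsub ?_).symm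
    intro x hx hxn
    rw [if_neg]
    rintro ⟨_, hxρ⟩
    exact hxn (Finset.mem_powersetCard.mpr ⟨hxρ, hB x hx⟩)
  have h5 : ∑ s ∈ ρ.powersetCard (n + 1), (if (a : Finset V) ⊆ s ∧ s ⊆ ρ then (1 : ZMod 2) else 0)
      = ∑ s ∈ ρ.powersetCard (n + 1), (if (a : Finset V) ⊆ s then (1 : ZMod 2) else 0) := by
    refine Finset.sum_congr rfl ?_
    intro s hs
    have := (Finset.mem_powersetCard.mp hs).1
    simp [this]
  have h6 := parity_sum (a : Finset V) ρ (by omega)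
  rw [ha] at h6
  show (bd A B) (colF B ρ) a = 0
  rw [h3]
  simp only []
  rw [h4, h5, h6]

lemma rk_erase_col (A B : Finset (Finset V)) (b₀ : Finset V) (hb : b₀ ∈ B)
    (hmem : colF A b₀ ∈ Submodule.span (ZMod 2)
      (colF A '' ((B.erase b₀ : Finset (Finset V)) : Set (Finset V)))) :
    rk A (B.erase b₀) = rk A B := by
  have hsp : Submodule.span (ZMod 2) (colF A '' (B : Set (Finset V)))
      = Submodule.span (ZMod 2) (colF A '' ((B.erase b₀ : Finset (Finset V)) : Set (Finset V))) := by
    conv_lhs => rw [← Finset.insert_erase hb]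
    rw [Finset.coe_insert, Set.image_insert_eq, Submodule.span_insert_eq_span hmem]
  unfold rk
  rw [hsp]

lemma rk_erase_row (A B : Finset (Finset V)) (a₀ : Finset V) (ha : a₀ ∈ A)
    (h : ∀ b ∈ B, ¬ a₀ ⊆ b) : rk (A.erase a₀) B = rk A B := by
  classical
  set ι : ↥(A.erase a₀) → ↥A := fun x => ⟨↑x, Finset.mem_of_mem_erase x.2⟩ with hι
  set π : (↥A → ZMod 2) →ₗ[ZMod 2] (↥(A.erase a₀) → ZMod 2) :=
    LinearMap.funLeft (ZMod 2) (ZMod 2) ι with hπ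
  have hπcol : ∀ s : Finset V, π (colF A s) = colF (A.erase a₀) s := fun s => rfl
  set p := Submodule.span (ZMod 2) (colF A '' (B : Set (Finset V))) with hp
  have hmap : Submodule.map π p = Submodule.span (ZMod 2)
      (colF (A.erase a₀) '' (B : Set (Finset V))) := by
    rw [hp, Submodule.map_span, Set.image_image]
    exact congrArg _ (Set.image_congr (fun s _ => hπcol s))
  set E : (↥A → ZMod 2) →ₗ[ZMod 2] ZMod 2 := LinearMap.proj ⟨a₀, ha⟩ with hE
  have hpE : p ≤ LinearMap.ker E := by
    rw [hp, Submodule.span_le]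
    rintro x ⟨s, hs, rfl⟩
    simp only [SetLike.mem_coe, LinearMap.mem_ker]
    show colF A s ⟨a₀, ha⟩ = 0
    simp [colF, h s hs]
  have hinj : Function.Injective (π.comp p.subtype) := by
    rw [← LinearMap.ker_eq_bot, LinearMap.ker_eq_bot']
    intro x hx
    have hx1 : π x.1 = 0 := hx
    have hxE : E x.1 = 0 := hpE x.2
    have hx0 : x.1 = 0 := by
      funext aa
      by_cases hc : (aa : Finset V) = a₀
      · have haa : aa = (⟨a₀, ha⟩ : ↥A) := Subtype.ext hc
        rw [haa]; exact hxE
      · have haa : (aa : Finset V) ∈ A.erase a₀ := Finset.mem_erase.mpr ⟨hc, aa.2⟩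
        have h2 := congrFun hx1 ⟨↑aa, haa⟩
        exact h2
    exact Subtype.ext hx0
  have h1 : Module.finrank (ZMod 2) (Submodule.map π p) = Module.finrank (ZMod 2) p := by
    have h2 : LinearMap.range (π.comp p.subtype) = Submodule.map π p := by
      rw [LinearMap.range_comp, Submodule.range_subtype]
    rw [← h2]
    exact LinearMap.finrank_range_of_inj hinj
  show Module.finrank (ZMod 2) (Submodule.span (ZMod 2)
    (colF (A.erase a₀) '' (B : Set (Finset V)))) = Module.finrank (ZMod 2) p
  rw [← hmap, h1]

lemma rk_pivot (A B : Finset (Finset V)) (a₀ b₀ : Finset V) (ha : a₀ ∈ A) (hb : b₀ ∈ B)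
    (hab : a₀ ⊆ b₀) (h : ∀ b ∈ B.erase b₀, ¬ a₀ ⊆ b) :
    rk A B = rk (A.erase a₀) (B.erase b₀) + 1 := by
  have key : rk A B = rk A (B.erase b₀) + 1 := by
    set p := Submodule.span (ZMod 2)
      (colF A '' ((B.erase b₀ : Finset (Finset V)) : Set (Finset V))) with hp
    set v := colF A b₀ with hv
    set E : (↥A → ZMod 2) →ₗ[ZMod 2] ZMod 2 := LinearMap.proj ⟨a₀, ha⟩ with hE
    have hpE : p ≤ LinearMap.ker E := by
      rw [hp, Submodule.span_le]
      rintro x ⟨s, hs, rfl⟩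
      simp only [SetLike.mem_coe, LinearMap.mem_ker]
      show colF A s ⟨a₀, ha⟩ = 0
      simp [colF, h s hs]
    have hEv : E v = 1 := by
      show colF A b₀ ⟨a₀, ha⟩ = 1
      simp [colF, hab]
    have hv0 : v ≠ 0 := by
      intro h0
      rw [h0, map_zero] at hEv
      exact one_ne_zero hEv.symm
    have hspan : Submodule.span (ZMod 2) (colF A '' (B : Set (Finset V)))
        = Submodule.span (ZMod 2) {v} ⊔ p := by
      conv_lhs => rw [← Finset.insert_erase hb]
      rw [Finset.coe_insert, Set.image_insert_eq, Submodule.span_insert]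
    have hinf : Submodule.span (ZMod 2) {v} ⊓ p = ⊥ := by
      rw [eq_bot_iff]
      rintro x hx
      obtain ⟨hx1, hx2⟩ := Submodule.mem_inf.mp hx
      obtain ⟨c, rfl⟩ := Submodule.mem_span_singleton.mp hx1
      have hc : E (c • v) = 0 := hpE hx2
      rw [map_smul, hEv, smul_eq_mul, mul_one] at hc
      simp [hc]
    have hfr := Submodule.finrank_sup_add_finrank_inf_eq (Submodule.span (ZMod 2) {v}) p
    rw [hinf, finrank_bot, finrank_span_singleton hv0] at hfr
    show Module.finrank (ZMod 2) (Submodule.span (ZMod 2) (colF A '' (B : Set (Finset V))))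
      = Module.finrank (ZMod 2) p + 1
    rw [hspan]
    omega
  rw [key, rk_erase_row A (B.erase b₀) a₀ ha h]

lemma kfaces_erase (K : Finset (Finset V)) (ρ : Finset V) (n : ℕ) :
    kfaces (K.erase ρ) n = (kfaces K n).erase ρ :=
  Finset.filter_erase _ ρ K

lemma kfaces_erase_of_ne (K : Finset (Finset V)) (ρ : Finset V) (n : ℕ) (h : ρ.card ≠ n) :
    kfaces (K.erase ρ) n = kfaces K n := by
  rw [kfaces_erase, Finset.erase_eq_of_notMem]
  intro hmem
  exact h (Finset.mem_filter.mp hmem).2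

lemma rank_nullity (K : Finset (Finset V)) (n : ℕ) :
    Module.finrank (ZMod 2) (LinearMap.range (bdry2 K n))
      + Module.finrank (ZMod 2) (LinearMap.ker (bdry2 K n)) = (kfaces K (n + 1)).card := by
  have := LinearMap.finrank_range_add_finrank_ker (bdry2 K n)
  rwa [Module.finrank_pi, Fintype.card_coe] at this

lemma range_le_ker (K : Finset (Finset V)) (hK : IsCplx K) (n : ℕ) :
    LinearMap.range (bdry2 K (n + 1)) ≤ LinearMap.ker (bdry2 K n) := by
  rw [bdry2_eq_bd K (n + 1), range_bd, Submodule.span_le]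
  rintro x ⟨ρ, hρ, rfl⟩
  simp only [SetLike.mem_coe, LinearMap.mem_ker]
  have hρ' : ρ ∈ K ∧ ρ.card = n + 2 := Finset.mem_filter.mp (Finset.mem_coe.mp hρ)
  rw [bdry2_eq_bd]
  exact bd_colF _ _ n (fun x hx => (Finset.mem_filter.mp hx).2)
    (fun x hx => (Finset.mem_filter.mp hx).2) ρ hρ'.2
    (fun s hs hcard => Finset.mem_filter.mpr ⟨hK ρ hρ'.1 s hs, hcard⟩)

lemma betti2_eq (K : Finset (Finset V)) (i : ℕ) :
    betti2 K i = Module.finrank (ZMod 2) (LinearMap.ker (bdry2 K i))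
      - Module.finrank (ZMod 2) (LinearMap.range (bdry2 K (i + 1))) := rfl

lemma finrank_range_le_ker (K : Finset (Finset V)) (hK : IsCplx K) (n : ℕ) :
    Module.finrank (ZMod 2) (LinearMap.range (bdry2 K (n + 1)))
      ≤ Module.finrank (ZMod 2) (LinearMap.ker (bdry2 K n)) :=
  Submodule.finrank_mono (range_le_ker K hK n)

lemma elemCollapse_card (X : Finset (Finset V)) (hX : IsCplx X) (σ τ : Finset V)
    (hτ : τ ∈ X) (hst : σ ⊂ τ) (huniq : ∀ ρ ∈ X, σ ⊂ ρ → ρ = τ) :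
    τ.card = σ.card + 1 := by
  obtain ⟨v, hvτ, hvσ⟩ := Finset.exists_of_ssubset hst
  have hsub : insert v σ ⊆ τ := Finset.insert_subset hvτ hst.subset
  have hmem : insert v σ ∈ X := hX τ hτ _ hsub
  have hss : σ ⊂ insert v σ := Finset.ssubset_insert hvσ
  have heq := huniq _ hmem hss
  rw [← heq, Finset.card_insert_of_notMem hvσ]

lemma collapse_step (X : Finset (Finset V)) (hX : IsCplx X)
    (σ τ : Finset V) (hσ : σ ∈ X) (hτ : τ ∈ X) (hst : σ ⊂ τ)
    (huniq : ∀ ρ ∈ X, σ ⊂ ρ → ρ = τ) (hσne : σ ≠ ∅) :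
    IsCplx ((X.erase σ).erase τ) ∧
      (∀ i, betti2 X i = betti2 ((X.erase σ).erase τ) i) ∧
      redEuler X = redEuler ((X.erase σ).erase τ) := by
  classical
  set X' := (X.erase σ).erase τ with hX'def
  have hcplx : IsCplx X' := by
    intro ρ hρ υ hυ
    have hρX : ρ ∈ X := Finset.mem_of_mem_erase (Finset.mem_of_mem_erase hρ)
    have hρτ : ρ ≠ τ := Finset.ne_of_mem_erase hρ
    have hρσ : ρ ≠ σ := Finset.ne_of_mem_erase (Finset.mem_of_mem_erase hρ)
    have hυX : υ ∈ X := hX ρ hρX υ hυ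
    have hυτ : υ ≠ τ := by
      rintro rfl
      have hss : σ ⊂ ρ := Finset.ssubset_iff_subset_ne.mpr
        ⟨hst.subset.trans hυ, fun h => hρσ h.symm⟩
      exact hρτ (huniq ρ hρX hss)
    have hυσ : υ ≠ σ := by
      intro hh
      rw [hh] at hυ
      have hss : σ ⊂ ρ := Finset.ssubset_iff_subset_ne.mpr ⟨hυ, fun h => hρσ h.symm⟩
      exact hρτ (huniq ρ hρX hss)
    exact Finset.mem_erase.mpr ⟨hυτ, Finset.mem_erase.mpr ⟨hυσ, hυX⟩⟩
  obtain ⟨e, he⟩ : ∃ e, σ.card = e + 1 := by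
    have h1 : 0 < σ.card := Finset.card_pos.mpr (Finset.nonempty_iff_ne_empty.mpr hσne)
    exact ⟨σ.card - 1, by omega⟩
  have hτc : τ.card = e + 2 := by
    rw [elemCollapse_card X hX σ τ hτ hst huniq]; omega
  have hkf : ∀ n, kfaces X' n = ((kfaces X n).erase σ).erase τ := by
    intro n
    rw [hX'def, kfaces_erase, kfaces_erase]
  have hσm : σ ∈ kfaces X (e + 1) := Finset.mem_filter.mpr ⟨hσ, he⟩
  have hτm : τ ∈ kfaces X (e + 2) := Finset.mem_filter.mpr ⟨hτ, hτc⟩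
  have hkfo : ∀ n, n ≠ e + 1 → n ≠ e + 2 → kfaces X' n = kfaces X n := by
    intro n h1 h2
    have h3 : σ ∉ kfaces X n := by
      intro hm
      have := (Finset.mem_filter.mp hm).2
      omega
    have h4 : τ ∉ (kfaces X n).erase σ := by
      intro hm
      have := (Finset.mem_filter.mp (Finset.mem_of_mem_erase hm)).2
      omega
    rw [hkf n, Finset.erase_eq_of_notMem h4, Finset.erase_eq_of_notMem h3]
  have hkf1 : kfaces X' (e + 1) = (kfaces X (e + 1)).erase σ := by
    rw [hkf]
    apply Finset.erase_eq_of_notMem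
    intro hm
    have := (Finset.mem_filter.mp (Finset.mem_of_mem_erase hm)).2
    omega
  have hkf2 : kfaces X' (e + 2) = (kfaces X (e + 2)).erase τ := by
    rw [hkf]
    congr 1
    apply Finset.erase_eq_of_notMem
    intro hm
    have := (Finset.mem_filter.mp hm).2
    omega
  -- rank computations
  have hre : rk (kfaces X e) ((kfaces X (e + 1)).erase σ) = rk (kfaces X e) (kfaces X (e + 1)) := by
    apply rk_erase_col _ _ σ hσm
    set S := (τ.powersetCard (e + 1)).erase σ with hS
    have hsum : colF (kfaces X e) σ = ∑ s ∈ S, colF (kfaces X e) s := by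
      funext a
      have ha : (a : Finset V).card = e := (Finset.mem_filter.mp a.2).2
      have hps := parity_sum (a : Finset V) τ (by omega)
      rw [ha] at hps
      have hσp : σ ∈ τ.powersetCard (e + 1) := Finset.mem_powersetCard.mpr ⟨hst.subset, he⟩
      have hsplit := Finset.sum_erase_add (τ.powersetCard (e + 1))
        (fun s => if (a : Finset V) ⊆ s then (1 : ZMod 2) else 0) hσp
      rw [hps] at hsplit
      have h2 : ∀ x y : ZMod 2, x + y = 0 → x = y := by decide
      have h3 := h2 _ _ hsplit
      rw [Finset.sum_apply]
      simp only [colF]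
      exact h3.symm
    rw [hsum]
    apply Submodule.sum_mem
    intro s hs
    apply Submodule.subset_span
    refine Set.mem_image_of_mem _ ?_
    have hsτ : s ⊆ τ ∧ s.card = e + 1 :=
      Finset.mem_powersetCard.mp (Finset.mem_of_mem_erase hs)
    exact Finset.mem_coe.mpr (Finset.mem_erase.mpr ⟨Finset.ne_of_mem_erase hs,
      Finset.mem_filter.mpr ⟨hX τ hτ s hsτ.1, hsτ.2⟩⟩)
  have hrp : rk (kfaces X (e + 1)) (kfaces X (e + 2))
      = rk ((kfaces X (e + 1)).erase σ) ((kfaces X (e + 2)).erase τ) + 1 := by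
    apply rk_pivot _ _ σ τ hσm hτm hst.subset
    intro b hb hsb
    have hbX := Finset.mem_filter.mp (Finset.mem_of_mem_erase hb)
    have hss : σ ⊂ b := by
      refine Finset.ssubset_iff_subset_ne.mpr ⟨hsb, ?_⟩
      intro hh
      rw [← hh] at hbX
      have := hbX.2
      omega
    exact (Finset.ne_of_mem_erase hb) (huniq b hbX.1 hss)
  have hrz : rk ((kfaces X (e + 2)).erase τ) (kfaces X (e + 3))
      = rk (kfaces X (e + 2)) (kfaces X (e + 3)) := by
    apply rk_erase_row _ _ τ hτm
    intro b hb hτb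
    have hbX := Finset.mem_filter.mp hb
    have hss : σ ⊂ b := Finset.ssubset_iff_subset_ne.mpr
      ⟨hst.subset.trans hτb, fun h => by rw [← h] at hbX; omega⟩
    have hbτ := huniq b hbX.1 hss
    rw [hbτ] at hbX
    omega
  have hrALL : ∀ n, n ≠ e + 1 →
      Module.finrank (ZMod 2) (LinearMap.range (bdry2 X' n))
        = Module.finrank (ZMod 2) (LinearMap.range (bdry2 X n)) := by
    intro n hn
    rw [finrank_range_bdry2, finrank_range_bdry2]
    by_cases h1 : n = e
    · rw [h1, hkfo e (by omega) (by omega), hkf1]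
      exact hre
    by_cases h2 : n = e + 2
    · rw [h2, hkf2, hkfo (e + 3) (by omega) (by omega)]
      exact hrz
    · rw [hkfo n (by omega) (by omega), hkfo (n + 1) (by omega) (by omega)]
  have hrM : Module.finrank (ZMod 2) (LinearMap.range (bdry2 X (e + 1)))
      = Module.finrank (ZMod 2) (LinearMap.range (bdry2 X' (e + 1))) + 1 := by
    rw [finrank_range_bdry2, finrank_range_bdry2, hkf1, hkf2]
    exact hrp
  have hcALL : ∀ n, n ≠ e + 1 → n ≠ e + 2 → (kfaces X' n).card = (kfaces X n).card :=
    fun n h1 h2 => by rw [hkfo n h1 h2]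
  have hc1 : (kfaces X (e + 1)).card = (kfaces X' (e + 1)).card + 1 := by
    rw [hkf1, Finset.card_erase_of_mem hσm]
    have : 0 < (kfaces X (e + 1)).card := Finset.card_pos.mpr ⟨σ, hσm⟩
    omega
  have hc2 : (kfaces X (e + 2)).card = (kfaces X' (e + 2)).card + 1 := by
    rw [hkf2, Finset.card_erase_of_mem hτm]
    have : 0 < (kfaces X (e + 2)).card := Finset.card_pos.mpr ⟨τ, hτm⟩
    omega
  have hbetti : ∀ i, betti2 X i = betti2 X' i := by
    intro i
    have R1 := rank_nullity X i
    have R2 := rank_nullity X' i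
    have L1 := finrank_range_le_ker X hX i
    have L2 := finrank_range_le_ker X' hcplx i
    rw [betti2_eq, betti2_eq]
    by_cases hA : i = e
    · rw [hA] at R1 R2 L1 L2 ⊢
      have d1 := hrALL e (by omega)
      have d2 := hrM
      have d3 := hc1
      omega
    by_cases hB : i = e + 1
    · rw [hB] at R1 R2 L1 L2 ⊢
      have d1 := hrM
      have d2 := hrALL (e + 1 + 1) (by omega)
      have d3 : (kfaces X (e + 1 + 1)).card = (kfaces X' (e + 1 + 1)).card + 1 := hc2
      omega
    · have d1 := hrALL i (by omega)
      have d2 := hrALL (i + 1) (by omega)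
      have d3 := hcALL (i + 1) (by omega) (by omega)
      omega
  refine ⟨hcplx, hbetti, ?_⟩
  -- Euler characteristic
  have hτne : τ ≠ ∅ := by
    rintro rfl
    exact (Finset.not_ssubset_empty σ) hst
  have hτX' : τ ∉ X' := Finset.notMem_erase τ _
  have hσX' : σ ∉ insert τ X' := by
    rw [Finset.mem_insert]
    rintro (h | h)
    · exact hst.ne h
    · exact (Finset.notMem_erase σ (X.erase τ))
        (by
          have := Finset.mem_of_mem_erase h
          exact absurd this (Finset.notMem_erase σ _))
  have hXinsert : X = insert σ (insert τ X') := by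
    rw [hX'def, Finset.insert_erase (Finset.mem_erase.mpr ⟨fun h => hst.ne h.symm, hτ⟩),
      Finset.insert_erase hσ]
  unfold redEuler
  conv_lhs => rw [hXinsert]
  rw [Finset.filter_insert, Finset.filter_insert, if_pos hσne, if_pos hτne]
  rw [Finset.sum_insert, Finset.sum_insert]
  · have hkey : (-1 : ℤ) ^ (σ.card - 1) + (-1 : ℤ) ^ (τ.card - 1) = 0 := by
      have e1 : σ.card - 1 = e := by omega
      have e2 : τ.card - 1 = e + 1 := by omega
      rw [e1, e2, pow_succ]
      ring
    linarith
  · intro hmem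
    exact hτX' (Finset.mem_of_mem_filter τ hmem)
  · rw [Finset.mem_insert]
    rintro (h | h)
    · exact hst.ne h
    · have := Finset.mem_of_mem_filter σ h
      exact (Finset.notMem_erase σ (X.erase σ)) (by
        have h2 : σ ∉ X' := fun hc => (Finset.notMem_erase σ _) (Finset.mem_of_mem_erase hc)
        exact absurd this h2)

lemma collapsesTo_subset {X Y : Finset (Finset V)} (h : CollapsesTo X Y) : Y ⊆ X := by
  induction h with
  | refl => exact Finset.Subset.refl _
  | tail h h' ih =>
    obtain ⟨σ, hσ, τ, hτ, hst, huniq, rfl⟩ := h'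
    exact Finset.Subset.trans
      (Finset.Subset.trans (Finset.erase_subset _ _) (Finset.erase_subset _ _)) ih

lemma kfaces_pair_zero (w : V) : kfaces ({∅, {w}} : Finset (Finset V)) 0 = {∅} := by
  ext s
  simp only [kfaces, Finset.mem_filter, Finset.mem_insert, Finset.mem_singleton,
    Finset.card_eq_zero]
  constructor
  · rintro ⟨_, rfl⟩; rfl
  · rintro rfl
    exact ⟨Or.inl rfl, rfl⟩

lemma kfaces_pair_one (w : V) : kfaces ({∅, {w}} : Finset (Finset V)) 1 = {{w}} := by
  ext s
  simp only [kfaces, Finset.mem_filter, Finset.mem_insert, Finset.mem_singleton]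
  constructor
  · rintro ⟨h1 | h1, h2⟩
    · rw [h1] at h2; simp at h2
    · exact h1
  · rintro rfl
    exact ⟨Or.inr rfl, Finset.card_singleton w⟩

lemma kfaces_pair_big (w : V) (n : ℕ) (h : 2 ≤ n) :
    kfaces ({∅, {w}} : Finset (Finset V)) n = ∅ := by
  ext s
  simp only [kfaces, Finset.mem_filter, Finset.mem_insert, Finset.mem_singleton,
    Finset.notMem_empty, iff_false, not_and]
  rintro (rfl | rfl)
  · simp; omega
  · rw [Finset.card_singleton]; omega

lemma betti2_pair (w : V) (i : ℕ) : betti2 ({∅, {w}} : Finset (Finset V)) i = 0 := by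
  rcases i with _ | j
  · rw [betti2_eq]
    have hr : Module.finrank (ZMod 2)
        (LinearMap.range (bdry2 ({∅, {w}} : Finset (Finset V)) 0)) = 1 := by
      rw [finrank_range_bdry2, kfaces_pair_zero]
      show Module.finrank (ZMod 2) (Submodule.span (ZMod 2)
        (colF ({∅} : Finset (Finset V)) '' ((kfaces ({∅, {w}} : Finset (Finset V)) (0+1)) : Set (Finset V)))) = 1
      rw [kfaces_pair_one, Finset.coe_singleton, Set.image_singleton]
      apply finrank_span_singleton
      intro h0
      have := congrFun h0 ⟨∅, Finset.mem_singleton_self ∅⟩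
      simp [colF] at this
    have hrn := rank_nullity ({∅, {w}} : Finset (Finset V)) 0
    have hcard : (kfaces ({∅, {w}} : Finset (Finset V)) (0 + 1)).card = 1 := by
      have : kfaces ({∅, {w}} : Finset (Finset V)) (0 + 1) = {{w}} := kfaces_pair_one w
      rw [this, Finset.card_singleton]
    omega
  · rw [betti2_eq]
    have hz : Module.finrank (ZMod 2)
        (LinearMap.ker (bdry2 ({∅, {w}} : Finset (Finset V)) (j + 1))) = 0 := by
      have h1 := Submodule.finrank_le (LinearMap.ker (bdry2 ({∅, {w}} : Finset (Finset V)) (j + 1)))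
      have h2 : Module.finrank (ZMod 2)
          ((↥(kfaces ({∅, {w}} : Finset (Finset V)) (j + 1 + 1))) → ZMod 2)
          = (kfaces ({∅, {w}} : Finset (Finset V)) (j + 1 + 1)).card := by
        rw [Module.finrank_pi, Fintype.card_coe]
      have h3 : (kfaces ({∅, {w}} : Finset (Finset V)) (j + 1 + 1)).card = 0 := by
        rw [kfaces_pair_big w (j + 1 + 1) (by omega), Finset.card_empty]
      omega
    omega

lemma redEuler_pair (w : V) : redEuler ({∅, {w}} : Finset (Finset V)) = 0 := by
  unfold redEuler
  have hfil : ({∅, {w}} : Finset (Finset V)).filter (fun σ => σ ≠ ∅) = {({w} : Finset V)} := by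
    ext s
    simp only [Finset.mem_filter, Finset.mem_insert, Finset.mem_singleton]
    constructor
    · rintro ⟨rfl | rfl, h2⟩
      · exact absurd rfl h2
      · rfl
    · rintro rfl
      exact ⟨Or.inr rfl, Finset.singleton_ne_empty w⟩
  rw [hfil, Finset.sum_singleton, Finset.card_singleton]
  simp

lemma collapsesTo_invariants (X : Finset (Finset V)) (w : V)
    (h : CollapsesTo X ({∅, {w}} : Finset (Finset V))) (hX : IsCplx X) :
    (∀ i, betti2 X i = 0) ∧ redEuler X = 0 := by
  revert hX
  induction h using Relation.ReflTransGen.head_induction_on with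
  | refl =>
    intro _
    exact ⟨betti2_pair w, redEuler_pair w⟩
  | head hstep hrest ih =>
    rename_i a c
    intro hXa
    obtain ⟨σ, hσ, τ, hτ, hst, huniq, rfl⟩ := hstep
    have hσne : σ ≠ ∅ := by
      intro hempty
      subst hempty
      have hemp : (a.erase ∅).erase τ = ∅ := by
        apply Finset.eq_empty_of_forall_notMem
        intro ρ hρ
        have hρa : ρ ∈ a := Finset.mem_of_mem_erase (Finset.mem_of_mem_erase hρ)
        have h1 : ρ ≠ τ := Finset.ne_of_mem_erase hρ
        have h2 : ρ ≠ ∅ := Finset.ne_of_mem_erase (Finset.mem_of_mem_erase hρ)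
        exact h1 (huniq ρ hρa (Finset.ssubset_iff_subset_ne.mpr
          ⟨Finset.empty_subset ρ, fun hh => h2 hh.symm⟩))
      rw [hemp] at hrest
      have hsub := collapsesTo_subset hrest
      have hmem : (∅ : Finset V) ∈ ({∅, {w}} : Finset (Finset V)) :=
        Finset.mem_insert_self _ _
      exact Finset.notMem_empty _ (hsub hmem)
    obtain ⟨hcplx', hbetti, heuler⟩ := collapse_step a hXa σ τ hσ hτ hst huniq hσne
    obtain ⟨h1, h2⟩ := ih hcplx'
    exact ⟨fun i => by rw [hbetti i]; exact h1 i, by rw [heuler]; exact h2⟩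

end RCproof

/-- If removing the set `F` of facets from the pure `d`-complex `K`
leaves a collapsible complex, then `|F| = β̃_d(K; ℤ₂)`, all lower reduced Betti numbers
vanish, and `χ̃(K) = (-1)^d β̃_d(K; ℤ₂)`. -/
theorem RC_betti {V : Type*} [DecidableEq V] (K : Finset (Finset V)) (hK : IsCplx K)
    (d : ℕ) (hpure : PureDim K (d : ℤ)) (F : Finset (Finset V)) (hF : F ⊆ facets K)
    (hcol : Collapsible (K \ F)) :
    F.card = betti2 K d ∧ (∀ i : ℕ, i < d → betti2 K i = 0) ∧
      redEuler K = (-1 : ℤ) ^ d * (betti2 K d : ℤ) := by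
  classical
  obtain ⟨w, hw⟩ := hcol
  set L := K \ F with hLdef
  have hKne : K.Nonempty := hpure.1
  have hcard_le : ∀ s ∈ K, s.card ≤ d + 1 := by
    intro s hs
    have h1 := hpure.2.1 s hs
    exact_mod_cast h1
  have hFfacets : ∀ ρ ∈ F, ρ ∈ K ∧ ρ.card = d + 1 := by
    intro ρ hρ
    have hfac := hF hρ
    have hmem := (Finset.mem_filter.mp hfac).1
    have hmax := (Finset.mem_filter.mp hfac).2
    obtain ⟨t, htK, hsub, htc⟩ := hpure.2.2 ρ hmem
    have heq : ρ = t := hmax t htK hsub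
    refine ⟨hmem, ?_⟩
    rw [heq]
    exact_mod_cast htc
  have hLK : L ⊆ K := Finset.sdiff_subset
  have hLC : IsCplx L := by
    intro s hs t ht
    obtain ⟨hsK, hsF⟩ := Finset.mem_sdiff.mp hs
    have htK : t ∈ K := hK s hsK t ht
    refine Finset.mem_sdiff.mpr ⟨htK, ?_⟩
    intro htF
    have hmax := (Finset.mem_filter.mp (hF htF)).2
    have heq := hmax s hsK ht
    exact hsF (heq ▸ htF)
  have hkfL : ∀ n, n ≠ d + 1 → kfaces L n = kfaces K n := by
    intro n hn
    ext s
    simp only [kfaces, Finset.mem_filter, Finset.mem_sdiff, hLdef]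
    constructor
    · rintro ⟨⟨h1, _⟩, h2⟩; exact ⟨h1, h2⟩
    · rintro ⟨h1, h2⟩
      refine ⟨⟨h1, fun hFm => ?_⟩, h2⟩
      exact hn (by rw [← h2, (hFfacets s hFm).2])
  have hFsub : F ⊆ kfaces K (d + 1) := fun ρ hρ =>
    Finset.mem_filter.mpr ⟨(hFfacets ρ hρ).1, (hFfacets ρ hρ).2⟩
  have hkfKd1 : kfaces L (d + 1) = (kfaces K (d + 1)) \ F := by
    ext s
    simp only [kfaces, Finset.mem_filter, Finset.mem_sdiff, hLdef]
    tauto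
  have hcount : (kfaces K (d + 1)).card = (kfaces L (d + 1)).card + F.card := by
    rw [hkfKd1, Finset.card_sdiff_of_subset hFsub]
    have := Finset.card_le_card hFsub
    omega
  have hkf2K : kfaces K (d + 2) = ∅ := by
    apply Finset.eq_empty_of_forall_notMem
    intro s hs
    obtain ⟨h1, h2⟩ := Finset.mem_filter.mp hs
    have := hcard_le s h1
    omega
  have hkf2L : kfaces L (d + 2) = ∅ := by rw [hkfL (d + 2) (by omega)]; exact hkf2K
  have hinv := collapsesTo_invariants L w hw hLC
  have hrtop : ∀ (Y : Finset (Finset V)), kfaces Y (d + 2) = ∅ →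
      Module.finrank (ZMod 2) (LinearMap.range (bdry2 Y (d + 1))) = 0 := by
    intro Y hY
    have h1 := LinearMap.finrank_range_le (bdry2 Y (d + 1))
    have h2 : Module.finrank (ZMod 2) ((↥(kfaces Y (d + 1 + 1))) → ZMod 2)
        = (kfaces Y (d + 1 + 1)).card := by rw [Module.finrank_pi, Fintype.card_coe]
    have h3 : (kfaces Y (d + 1 + 1)).card = 0 := by
      have h4 : kfaces Y (d + 1 + 1) = ∅ := hY
      rw [h4]; rfl
    omega
  have hrKL : Module.finrank (ZMod 2) (LinearMap.range (bdry2 K d))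
      = Module.finrank (ZMod 2) (LinearMap.range (bdry2 L d)) := by
    have hAd : kfaces K d = kfaces L d := (hkfL d (by omega)).symm
    rw [finrank_range_bdry2, finrank_range_bdry2, hAd]
    suffices hsp : Submodule.span (ZMod 2)
        (colF (kfaces L d) '' ((kfaces K (d + 1)) : Set (Finset V)))
        = Submodule.span (ZMod 2)
          (colF (kfaces L d) '' ((kfaces L (d + 1)) : Set (Finset V))) by
      unfold rk
      rw [hsp]
    apply le_antisymm
    · rw [Submodule.span_le]
      rintro x ⟨ρ, hρ, rfl⟩
      have hρm := Finset.mem_filter.mp (Finset.mem_coe.mp hρ)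
      by_cases hρL : ρ ∈ kfaces L (d + 1)
      · exact Submodule.subset_span (Set.mem_image_of_mem _ (Finset.mem_coe.mpr hρL))
      · have hρF : ρ ∈ F := by
          by_contra hρF
          exact hρL (Finset.mem_filter.mpr ⟨Finset.mem_sdiff.mpr ⟨hρm.1, hρF⟩, hρm.2⟩)
        rcases Nat.eq_zero_or_pos d with hd0 | hdpos
        · subst hd0
          have hwL : ({w} : Finset V) ∈ L := collapsesTo_subset hw
            (Finset.mem_insert_of_mem (Finset.mem_singleton_self _))
          have hwk : ({w} : Finset V) ∈ kfaces L (0 + 1) :=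
            Finset.mem_filter.mpr ⟨hwL, Finset.card_singleton w⟩
          have hcol : colF (kfaces L 0) ρ = colF (kfaces L 0) {w} := by
            funext a
            have ha : (a : Finset V).card = 0 := (Finset.mem_filter.mp a.2).2
            have ha' : (a : Finset V) = ∅ := Finset.card_eq_zero.mp ha
            simp [colF, ha', Finset.empty_subset]
          rw [SetLike.mem_coe, hcol]
          exact Submodule.subset_span (Set.mem_image_of_mem _ (Finset.mem_coe.mpr hwk))
        · obtain ⟨e', rfl⟩ : ∃ e', d = e' + 1 := ⟨d - 1, by omega⟩
          have hex : LinearMap.ker (bdry2 L e') = LinearMap.range (bdry2 L (e' + 1)) := by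
            refine (Submodule.eq_of_le_of_finrank_le (range_le_ker L hLC e') ?_).symm
            have hb := hinv.1 e'
            rw [betti2_eq] at hb
            omega
          have hker : colF (kfaces L (e' + 1)) ρ ∈ LinearMap.ker (bdry2 L e') := by
            rw [LinearMap.mem_ker, bdry2_eq_bd]
            apply bd_colF _ _ e' (fun x hx => (Finset.mem_filter.mp hx).2)
              (fun x hx => (Finset.mem_filter.mp hx).2) ρ (by omega)
            intro s hs hcard
            have hsK : s ∈ K := hK ρ hρm.1 s hs
            have : s ∈ kfaces K (e' + 1) := Finset.mem_filter.mpr ⟨hsK, hcard⟩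
            rw [← hkfL (e' + 1) (by omega)] at this
            exact this
          rw [hex] at hker
          rw [bdry2_eq_bd, range_bd] at hker
          exact hker
    · apply Submodule.span_mono
      apply Set.image_mono
      exact Finset.coe_subset.mpr (Finset.filter_subset_filter _ hLK)
  have hbd : betti2 K d = F.card := by
    rw [betti2_eq]
    have R1 := rank_nullity K d
    have R2 := rank_nullity L d
    have hbL := hinv.1 d
    rw [betti2_eq] at hbL
    have htopK := hrtop K hkf2K
    have htopL := hrtop L hkf2L
    have hLle := finrank_range_le_ker L hLC d
    omega
  have hlow : ∀ i : ℕ, i < d → betti2 K i = 0 := by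
    intro i hi
    have hbLi := hinv.1 i
    rw [betti2_eq] at hbLi ⊢
    have R1 := rank_nullity K i
    have R2 := rank_nullity L i
    have LK := finrank_range_le_ker K hK i
    have LL := finrank_range_le_ker L hLC i
    have hri : Module.finrank (ZMod 2) (LinearMap.range (bdry2 K i))
        = Module.finrank (ZMod 2) (LinearMap.range (bdry2 L i)) := by
      rw [finrank_range_bdry2, finrank_range_bdry2, hkfL i (by omega), hkfL (i + 1) (by omega)]
    have hri1 : Module.finrank (ZMod 2) (LinearMap.range (bdry2 K (i + 1)))
        = Module.finrank (ZMod 2) (LinearMap.range (bdry2 L (i + 1))) := by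
      by_cases hcase : i + 1 = d
      · rw [hcase]; exact hrKL
      · rw [finrank_range_bdry2, finrank_range_bdry2, hkfL (i + 1) (by omega),
          hkfL (i + 1 + 1) (by omega)]
    have hci : (kfaces K (i + 1)).card = (kfaces L (i + 1)).card := by
      rw [hkfL (i + 1) (by omega)]
    omega
  have heuler : redEuler K = (-1 : ℤ) ^ d * (F.card : ℤ) := by
    unfold redEuler
    have hsplit : K.filter (fun s => s ≠ ∅) = (L.filter (fun s => s ≠ ∅)) ∪ F := by
      ext s
      simp only [Finset.mem_filter, Finset.mem_union, Finset.mem_sdiff, hLdef]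
      constructor
      · rintro ⟨hsK, hsne⟩
        by_cases hsF : s ∈ F
        · exact Or.inr hsF
        · exact Or.inl ⟨⟨hsK, hsF⟩, hsne⟩
      · rintro (⟨⟨hsK, _⟩, hsne⟩ | hsF)
        · exact ⟨hsK, hsne⟩
        · refine ⟨(hFfacets s hsF).1, ?_⟩
          intro hse
          have h5 := (hFfacets s hsF).2
          rw [hse] at h5
          simp at h5
    have hdisj : Disjoint (L.filter (fun s => s ≠ ∅)) F := by
      rw [Finset.disjoint_left]
      intro s hs hsF
      exact (Finset.mem_sdiff.mp (Finset.mem_of_mem_filter s hs)).2 hsF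
    rw [hsplit, Finset.sum_union hdisj]
    have hFsum : (∑ s ∈ F, (-1 : ℤ) ^ (s.card - 1)) = F.card * (-1 : ℤ) ^ d := by
      rw [Finset.sum_congr rfl (fun s hs => by
        rw [(show s.card - 1 = d by have := (hFfacets s hs).2; omega)])]
      rw [Finset.sum_const, nsmul_eq_mul]
    have hLeuler := hinv.2
    unfold redEuler at hLeuler
    rw [hFsum]
    have hcomm : (F.card : ℤ) * (-1 : ℤ) ^ d = (-1 : ℤ) ^ d * (F.card : ℤ) := mul_comm _ _
    linarith
  refine ⟨hbd.symm, hlow, ?_⟩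
  rw [hbd]
  exact heuler


end Paper
end

section
/- A nonempty pure 1-dimensional simplicial complex K satisfies the removal-collapsibility (RC) condition if and only if K is connected. -/
/-! Common definitions: finite abstract simplicial complexes, links, stars,
barycentric subdivision, joins, collapsibility, shellability, vertex
decomposability, star decomposability (also "in vertices"), and simplicial
homology (reduced, over ℤ and ℤ₂). -/

namespace Paper

open Finset

variable {V : Type*} [DecidableEq V]

set_option linter.unusedSectionVars false

/-- Connectivity predicate. -/
def Conn (K : Finset (Finset V)) : Prop :=
  ∀ u ∈ verts K, ∀ v ∈ verts K,
    Relation.ReflTransGen (fun a b => ({a, b} : Finset V) ∈ K) u v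

lemma mem_verts' {K : Finset (Finset V)} {a : V} : a ∈ verts K ↔ ∃ σ ∈ K, a ∈ σ := by
  simp [verts, Finset.mem_sup]

lemma singleton_mem {K : Finset (Finset V)} (hK : IsCplx K) {a : V} {σ : Finset V}
    (hσ : σ ∈ K) (ha : a ∈ σ) : ({a} : Finset V) ∈ K :=
  hK σ hσ {a} (by simpa using ha)

lemma singleton_mem_of_verts {K : Finset (Finset V)} (hK : IsCplx K) {a : V}
    (ha : a ∈ verts K) : ({a} : Finset V) ∈ K := by
  obtain ⟨σ, hσ, haσ⟩ := mem_verts'.mp ha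
  exact singleton_mem hK hσ haσ

lemma rel_symm (K : Finset (Finset V)) :
    Symmetric fun a b => ({a, b} : Finset V) ∈ K := fun a b h => by
  show ({b, a} : Finset V) ∈ K
  rwa [Finset.pair_comm]

lemma rel_mono {K K' : Finset (Finset V)} (h : K' ⊆ K) {a b : V}
    (hr : Relation.ReflTransGen (fun a b => ({a, b} : Finset V) ∈ K') a b) :
    Relation.ReflTransGen (fun a b => ({a, b} : Finset V) ∈ K) a b :=
  Relation.ReflTransGen.mono (r := fun a b => ({a, b} : Finset V) ∈ K')
    (p := fun a b => ({a, b} : Finset V) ∈ K) (fun _ _ hxy => h hxy) a b hr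

/-- Lift a `ReflTransGen` along a map that sends generators to paths. -/
lemma rel_lift {K K' : Finset (Finset V)} (f : V → V)
    (hgen : ∀ a b : V, ({a, b} : Finset V) ∈ K →
      Relation.ReflTransGen (fun a b => ({a, b} : Finset V) ∈ K') (f a) (f b))
    {a b : V} (h : Relation.ReflTransGen (fun a b => ({a, b} : Finset V) ∈ K) a b) :
    Relation.ReflTransGen (fun a b => ({a, b} : Finset V) ∈ K') (f a) (f b) := by
  induction h with
  | refl => exact .refl
  | tail _ hbc ih => exact ih.trans (hgen _ _ hbc)


section Deg1

variable {K : Finset (Finset V)} {v u : V}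

/-- The faces of `K` containing `v` are exactly `{v}` and `{v,u}`. -/
def Deg1 (K : Finset (Finset V)) (v u : V) : Prop :=
  ∀ ρ ∈ K, v ∈ ρ → ρ = {v} ∨ ρ = ({v, u} : Finset V)

lemma deg1_other (hdeg : Deg1 K v u) {b : V} (hb : b ≠ v)
    (hab : ({v, b} : Finset V) ∈ K) : b = u := by
  rcases hdeg _ hab (by simp) with h | h
  · have : b ∈ ({v} : Finset V) := h ▸ (by simp : b ∈ ({v, b} : Finset V))
    exact absurd (by simpa using this) hb
  · have : b ∈ ({v, u} : Finset V) := h ▸ (by simp : b ∈ ({v, b} : Finset V))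
    rcases Finset.mem_insert.mp this with h' | h'
    · exact absurd h' hb
    · simpa using h'

lemma deg1_gen (hdeg : Deg1 K v u) (hvu : v ≠ u) {a b : V}
    (hab : ({a, b} : Finset V) ∈ K) :
    Relation.ReflTransGen (fun a b => ({a, b} : Finset V) ∈ K.filter (v ∉ ·))
      (if a = v then u else a) (if b = v then u else b) := by
  by_cases ha : a = v
  · by_cases hb : b = v
    · rw [ha, hb]
    · subst ha
      have := deg1_other hdeg hb hab
      rw [if_pos rfl, if_neg hb, this]
  · by_cases hb : b = v
    · subst hb
      rw [Finset.pair_comm] at hab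
      have := deg1_other hdeg ha hab
      rw [if_pos rfl, if_neg ha, this]
    · rw [if_neg ha, if_neg hb]
      refine Relation.ReflTransGen.single (Finset.mem_filter.mpr ⟨hab, ?_⟩)
      simp only [Finset.mem_insert, Finset.mem_singleton, not_or]
      exact ⟨Ne.symm ha, Ne.symm hb⟩

lemma conn_delete_of_deg1 (hdeg : Deg1 K v u) (hvu : v ≠ u) (hconn : Conn K) :
    Conn (K.filter (v ∉ ·)) := by
  intro a ha b hb
  have hsub : K.filter (v ∉ ·) ⊆ K := Finset.filter_subset _ _
  have havK : a ∈ verts K := by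
    obtain ⟨σ, hσ, h⟩ := mem_verts'.mp ha; exact mem_verts'.mpr ⟨σ, hsub hσ, h⟩
  have hbvK : b ∈ verts K := by
    obtain ⟨σ, hσ, h⟩ := mem_verts'.mp hb; exact mem_verts'.mpr ⟨σ, hsub hσ, h⟩
  have hav : a ≠ v := by
    obtain ⟨σ, hσ, h⟩ := mem_verts'.mp ha
    rintro rfl; exact (Finset.mem_filter.mp hσ).2 h
  have hbv : b ≠ v := by
    obtain ⟨σ, hσ, h⟩ := mem_verts'.mp hb
    rintro rfl; exact (Finset.mem_filter.mp hσ).2 h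
  have := rel_lift (fun x => if x = v then u else x) (fun a b hab => deg1_gen hdeg hvu hab)
    (hconn a havK b hbvK)
  simpa [hav, hbv] using this

lemma conn_of_deg1 (hK : IsCplx K) (hdeg : Deg1 K v u) (hvu : v ≠ u)
    (hvuK : ({v, u} : Finset V) ∈ K) (hconn : Conn (K.filter (v ∉ ·))) : Conn K := by
  haveI : Std.Symm (fun a b : V => ({a, b} : Finset V) ∈ K) := ⟨fun a b h => rel_symm K h⟩
  have hsymm : ∀ {a b : V}, Relation.ReflTransGen (fun a b => ({a, b} : Finset V) ∈ K) a b →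
      Relation.ReflTransGen (fun a b => ({a, b} : Finset V) ∈ K) b a :=
    fun h => Std.Symm.symm _ _ h
  intro a ha b hb
  have huK : ({u} : Finset V) ∈ K.filter (v ∉ ·) := by
    refine Finset.mem_filter.mpr ⟨singleton_mem hK hvuK (by simp), by
      simp only [Finset.mem_singleton]; exact hvu⟩
  have key : ∀ x, x ∈ verts K →
      (if x = v then u else x) ∈ verts (K.filter (v ∉ ·)) ∧
      Relation.ReflTransGen (fun a b => ({a, b} : Finset V) ∈ K) x
        (if x = v then u else x) := by
    intro x hx
    by_cases hxv : x = v
    · subst hxv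
      rw [if_pos rfl]
      exact ⟨mem_verts'.mpr ⟨{u}, huK, by simp⟩, Relation.ReflTransGen.single hvuK⟩
    · have hxK : ({x} : Finset V) ∈ K.filter (v ∉ ·) :=
        Finset.mem_filter.mpr ⟨singleton_mem_of_verts hK hx, by
          simp only [Finset.mem_singleton]; exact Ne.symm hxv⟩
      rw [if_neg hxv]
      exact ⟨mem_verts'.mpr ⟨{x}, hxK, by simp⟩, Relation.ReflTransGen.refl⟩
  obtain ⟨ha', hpa⟩ := key a ha
  obtain ⟨hb', hpb⟩ := key b hb
  exact hpa.trans ((rel_mono (Finset.filter_subset _ _) (hconn _ ha' _ hb')).trans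
    (hsymm hpb))

end Deg1


section Paths

def Adj (K : Finset (Finset V)) (a b : V) : Prop := ({a, b} : Finset V) ∈ K ∧ a ≠ b

lemma adj_symm {K : Finset (Finset V)} {a b : V} (h : Adj K a b) : Adj K b a :=
  ⟨by rw [Finset.pair_comm]; exact h.1, h.2.symm⟩

lemma rel_of_chain {r : V → V → Prop} :
    ∀ (t : List V) (b : V), List.Chain r b t → ∀ x ∈ b :: t, Relation.ReflTransGen r b x := by
  intro t
  induction t with
  | nil =>
    intro b _ x hx
    rw [List.mem_singleton] at hx
    subst hx; exact .refl
  | cons c t ih =>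
    intro b hc x hx
    rcases List.chain_cons.mp hc with ⟨hbc, ht⟩
    rcases List.mem_cons.mp hx with h | h
    · subst h; exact .refl
    · exact Relation.ReflTransGen.head hbc (ih c ht x h)

lemma chain_erase {K : Finset (Finset V)} {e : Finset V} {v : V} (hv : v ∈ e) :
    ∀ (t : List V) (u : V), List.Chain (Adj K) u t → v ∉ (u :: t) →
      List.Chain (fun a c => ({a, c} : Finset V) ∈ K.erase e) u t := by
  intro t
  induction t with
  | nil => intro u _ _; exact List.Chain.nil
  | cons c t ih =>
    intro u hch hvm
    rcases List.chain_cons.mp hch with ⟨huc, ht⟩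
    refine List.chain_cons.mpr ⟨?_, ih c ht ?_⟩
    · refine Finset.mem_erase.mpr ⟨?_, huc.1⟩
      intro he
      have : v ∈ ({u, c} : Finset V) := he ▸ hv
      rcases Finset.mem_insert.mp this with h | h
      · exact hvm (by rw [h]; exact List.mem_cons_self)
      · exact hvm (by rw [Finset.mem_singleton.mp h]; exact List.mem_cons_of_mem _ (List.mem_cons_self))
    · intro hvm'
      exact hvm (List.mem_cons_of_mem _ hvm')

lemma ext_path {K : Finset (Finset V)} : ∀ (k : ℕ) (a : V) (t : List V),
    (a :: t).Nodup → List.Chain (Adj K) a t → (∀ x ∈ a :: t, x ∈ verts K) →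
    (verts K).card ≤ (a :: t).length + k →
    ∃ b m, (b :: m).Nodup ∧ List.Chain (Adj K) b m ∧ (∀ x ∈ b :: m, x ∈ verts K) ∧
      (∀ x, Adj K b x → x ∈ b :: m) ∧ (a :: t).length ≤ (b :: m).length := by
  intro k
  induction k with
  | zero =>
    intro a t hnd hch hv hcard
    refine ⟨a, t, hnd, hch, hv, ?_, le_rfl⟩
    intro x hx
    have htf : (a :: t).toFinset = verts K := by
      apply Finset.eq_of_subset_of_card_le
      · intro y hy; exact hv y (List.mem_toFinset.mp hy)
      · rw [List.toFinset_card_of_nodup hnd]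
        simpa using hcard
    have hxv : x ∈ verts K := mem_verts'.mpr ⟨{a, x}, hx.1, by simp⟩
    rw [← htf] at hxv
    exact List.mem_toFinset.mp hxv
  | succ k ih =>
    intro a t hnd hch hv hcard
    by_cases hmax : ∀ x, Adj K a x → x ∈ a :: t
    · exact ⟨a, t, hnd, hch, hv, hmax, le_rfl⟩
    · push_neg at hmax
      obtain ⟨x, hadj, hxl⟩ := hmax
      obtain ⟨b, m, h1, h2, h3, h4, h5⟩ := ih x (a :: t)
        (List.nodup_cons.mpr ⟨hxl, hnd⟩)
        (List.chain_cons.mpr ⟨adj_symm hadj, hch⟩)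
        (by
          intro y hy
          rcases List.mem_cons.mp hy with h | h
          · subst h; exact mem_verts'.mpr ⟨{a, y}, hadj.1, by simp⟩
          · exact hv y h)
        (by simp only [List.length_cons] at hcard ⊢; omega)
      exact ⟨b, m, h1, h2, h3, h4, le_trans (by simp) h5⟩

end Paths


lemma pair_eq_cases {a b v x : V} (hvx : v ≠ x) (h : ({a, b} : Finset V) = {v, x}) :
    (a = v ∧ b = x) ∨ (a = x ∧ b = v) := by
  have ha : a = v ∨ a = x := by
    have : a ∈ ({v, x} : Finset V) := by rw [← h]; simp
    simpa using this
  have hb : b = v ∨ b = x := by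
    have : b ∈ ({v, x} : Finset V) := by rw [← h]; simp
    simpa using this
  have hv' : v = a ∨ v = b := by
    have : v ∈ ({a, b} : Finset V) := by rw [h]; simp
    simpa using this
  have hx' : x = a ∨ x = b := by
    have : x ∈ ({a, b} : Finset V) := by rw [h]; simp
    simpa using this
  rcases ha with h1 | h1 <;> rcases hb with h2 | h2
  · exfalso
    rcases hx' with h3 | h3
    · exact hvx (h3.trans h1).symm
    · exact hvx (h3.trans h2).symm
  · exact Or.inl ⟨h1, h2⟩
  · exact Or.inr ⟨h1, h2⟩
  · exfalso
    rcases hv' with h3 | h3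
    · exact hvx (h3.trans h1)
    · exact hvx (h3.trans h2)

lemma main_exists_F : ∀ (N : ℕ) (K : Finset (Finset V)), K.card ≤ N → IsCplx K →
    (∀ σ ∈ K, σ.card ≤ 2) → (verts K).Nonempty → Conn K →
    ∃ F ⊆ K, (∀ e ∈ F, e.card = 2) ∧ Collapsible (K \ F) := by
  intro N
  induction N with
  | zero =>
    intro K hcard _ _ hvne _
    have : K = ∅ := Finset.card_eq_zero.mp (Nat.le_zero.mp hcard)
    subst this
    simp [verts, Finset.Nonempty] at hvne
  | succ N ih =>
    intro K hcard hK h2 hvne hconn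
    by_cases hedge : ∃ e ∈ K, e.card = 2
    · obtain ⟨e₀, he₀K, he₀c⟩ := hedge
      obtain ⟨p, q, hpq, he₀⟩ := Finset.card_eq_two.mp he₀c
      have hpqK : ({p, q} : Finset V) ∈ K := he₀ ▸ he₀K
      obtain ⟨v, m, hnd, hch, hvm, hmax, hlen⟩ := ext_path (K := K) (verts K).card p [q]
        (by simp [hpq])
        (List.chain_cons.mpr ⟨⟨hpqK, hpq⟩, List.Chain.nil⟩)
        (by
          intro x hx
          have hx' : x = p ∨ x = q := by simpa using hx
          have hpv : p ∈ verts K := mem_verts'.mpr ⟨{p, q}, hpqK, by simp⟩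
          have hqv : q ∈ verts K := mem_verts'.mpr ⟨{p, q}, hpqK, by simp⟩
          rcases hx' with h | h
          · rw [h]; exact hpv
          · rw [h]; exact hqv)
        (by simp)
      match m, hch, hnd, hvm, hmax, hlen with
      | [], _, _, _, _, hlen => simp at hlen
      | u :: t, hch, hnd, hvm, hmax, _ =>
      have hvnotm : v ∉ u :: t := (List.nodup_cons.mp hnd).1
      have hvu : v ≠ u := fun h => hvnotm (h ▸ List.mem_cons_self)
      have hAdj_vu : Adj K v u := (List.chain_cons.mp hch).1
      have hcht : List.Chain (Adj K) u t := (List.chain_cons.mp hch).2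
      have hvuK : ({v, u} : Finset V) ∈ K := hAdj_vu.1
      have hvK : ({v} : Finset V) ∈ K := singleton_mem hK hvuK (by simp)
      have huK : ({u} : Finset V) ∈ K := singleton_mem hK hvuK (by simp)
      by_cases hdeg : Deg1 K v u
      · -- leaf case: collapse ({v}, {v,u})
        set K' := K.filter (v ∉ ·) with hK'def
        have hsubK' : K' ⊆ K := Finset.filter_subset _ _
        have hssub : K' ⊂ K := by
          refine ⟨hsubK', fun hsub => ?_⟩
          have := Finset.mem_filter.mp (hsub hvK)
          simp at this
        have hcard' : K'.card ≤ N := by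
          have := Finset.card_lt_card hssub; omega
        have hK'c : IsCplx K' := by
          intro σ hσ τ hτ
          obtain ⟨hσK, hσv⟩ := Finset.mem_filter.mp hσ
          exact Finset.mem_filter.mpr ⟨hK σ hσK τ hτ, fun hvτ => hσv (hτ hvτ)⟩
        have h2' : ∀ σ ∈ K', σ.card ≤ 2 := fun σ hσ => h2 σ (hsubK' hσ)
        have huK' : ({u} : Finset V) ∈ K' := Finset.mem_filter.mpr ⟨huK, by
          simp only [Finset.mem_singleton]; exact hvu⟩
        have hvne' : (verts K').Nonempty := ⟨u, mem_verts'.mpr ⟨{u}, huK', by simp⟩⟩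
        obtain ⟨F, hFK, hFe, w, hw⟩ := ih K' hcard' hK'c h2' hvne'
          (conn_delete_of_deg1 hdeg hvu hconn)
        have hFnov : ∀ f ∈ F, v ∉ f := fun f hf => (Finset.mem_filter.mp (hFK hf)).2
        refine ⟨F, hFK.trans hsubK', hFe, w, ?_⟩
        refine Relation.ReflTransGen.head ?_ hw
        refine ⟨{v}, ?_, {v, u}, ?_, ?_, ?_, ?_⟩
        · exact Finset.mem_sdiff.mpr ⟨hvK, fun hmem => hFnov _ hmem (by simp)⟩
        · exact Finset.mem_sdiff.mpr ⟨hvuK, fun hmem => hFnov _ hmem (by simp)⟩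
        · refine Finset.ssubset_iff_subset_ne.mpr ⟨by simp, fun h => ?_⟩
          have hu : u ∈ ({v} : Finset V) := by rw [h]; simp
          have hu' : u = v := by simpa using hu
          exact hvu hu'.symm
        · intro ρ hρ hssρ
          have hρK : ρ ∈ K := (Finset.mem_sdiff.mp hρ).1
          rcases hdeg ρ hρK (hssρ.1 (by simp)) with h | h
          · exact absurd (h ▸ hssρ) (lt_irrefl _)
          · exact h
        · ext σ
          simp only [Finset.mem_erase, Finset.mem_sdiff, hK'def, Finset.mem_filter]
          constructor
          · rintro ⟨⟨hσK, hσv⟩, hσF⟩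
            exact ⟨by rintro rfl; exact hσv (by simp), by rintro rfl; exact hσv (by simp),
              hσK, hσF⟩
          · rintro ⟨hσvu, hσv1, hσK, hσF⟩
            refine ⟨⟨hσK, fun hvσ => ?_⟩, hσF⟩
            rcases hdeg σ hσK hvσ with h | h
            · exact hσv1 h
            · exact hσvu h
      · -- there is an extra edge at v; remove it
        rw [Deg1] at hdeg; push_neg at hdeg
        obtain ⟨ρ, hρK, hvρ, hρ1, hρ2⟩ := hdeg
        have hρc : ρ.card = 2 := by
          have hle := h2 ρ hρK
          have h1le : 1 ≤ ρ.card := Finset.card_pos.mpr ⟨v, hvρ⟩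
          rcases Nat.lt_or_ge ρ.card 2 with h | h
          · exfalso
            have : ρ.card = 1 := by omega
            obtain ⟨y, hy⟩ := Finset.card_eq_one.mp this
            apply hρ1
            rw [hy]
            congr 1
            have : v ∈ ({y} : Finset V) := hy ▸ hvρ
            exact (Finset.mem_singleton.mp this).symm
          · omega
        obtain ⟨c, d, hcd, hρeq⟩ := Finset.card_eq_two.mp hρc
        obtain ⟨x, hxv, hρex⟩ : ∃ x, x ≠ v ∧ ρ = ({v, x} : Finset V) := by
          have : v = c ∨ v = d := by
            have := hρeq ▸ hvρ
            simpa using this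
          rcases this with rfl | rfl
          · exact ⟨d, fun h => hcd h.symm, by rw [hρeq]⟩
          · exact ⟨c, fun h => hcd h, by rw [hρeq, Finset.pair_comm]⟩
        have hxu : x ≠ u := by
          rintro rfl
          exact hρ2 hρex
        set e := ({v, x} : Finset V) with hedef
        have heK : e ∈ K := hρex ▸ hρK
        have hec : e.card = 2 := hρex ▸ hρc
        have hAdj_vx : Adj K v x := ⟨heK, Ne.symm hxv⟩
        have hxm : x ∈ u :: t := by
          rcases List.mem_cons.mp (hmax x hAdj_vx) with h | h
          · exact absurd h hxv
          · exact h
        set K₁ := K.erase e with hK₁def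
        have hsubK₁ : K₁ ⊆ K := Finset.erase_subset _ _
        have hcard₁ : K₁.card ≤ N := by
          have h1 : K₁.card < K.card := Finset.card_erase_lt_of_mem heK
          omega
        have hK₁c : IsCplx K₁ := by
          intro σ hσ τ hτ
          obtain ⟨hne, hσK⟩ := Finset.mem_erase.mp hσ
          refine Finset.mem_erase.mpr ⟨?_, hK σ hσK τ hτ⟩
          rintro rfl
          exact hne (Finset.eq_of_subset_of_card_le hτ (by rw [hec]; exact h2 σ hσK)).symm
        have h2₁ : ∀ σ ∈ K₁, σ.card ≤ 2 := fun σ hσ => h2 σ (hsubK₁ hσ)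
        have hvuK₁ : ({v, u} : Finset V) ∈ K₁ := by
          refine Finset.mem_erase.mpr ⟨fun h => ?_, hvuK⟩
          have h' : ({v, u} : Finset V) = {v, x} := h.trans hedef
          have : u ∈ ({v, x} : Finset V) := by rw [← h']; simp
          simp only [Finset.mem_insert, Finset.mem_singleton] at this
          rcases this with h' | h'
          · exact hvu h'.symm
          · exact hxu h'.symm
        have hpath_vx : Relation.ReflTransGen (fun a b => ({a, b} : Finset V) ∈ K₁) v x := by
          have hch₁ := chain_erase (K := K) (e := e) (v := v) (by simp [hedef]) t u hcht hvnotm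
          exact Relation.ReflTransGen.head hvuK₁ (rel_of_chain t u hch₁ x hxm)
        have hconn₁ : Conn K₁ := by
          intro a ha b hb
          have haK : a ∈ verts K := by
            obtain ⟨σ, hσ, h⟩ := mem_verts'.mp ha; exact mem_verts'.mpr ⟨σ, hsubK₁ hσ, h⟩
          have hbK : b ∈ verts K := by
            obtain ⟨σ, hσ, h⟩ := mem_verts'.mp hb; exact mem_verts'.mpr ⟨σ, hsubK₁ hσ, h⟩
          have gen : ∀ a b : V, ({a, b} : Finset V) ∈ K →
              Relation.ReflTransGen (fun a b => ({a, b} : Finset V) ∈ K₁) a b := by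
            intro a b hab
            by_cases h : ({a, b} : Finset V) = e
            · rcases pair_eq_cases (Ne.symm hxv) h with ⟨rfl, rfl⟩ | ⟨rfl, rfl⟩
              · exact hpath_vx
              · haveI : Std.Symm (fun a b : V => ({a, b} : Finset V) ∈ K₁) := ⟨fun a b h => rel_symm K₁ h⟩
                exact Std.Symm.symm _ _ hpath_vx
            · exact Relation.ReflTransGen.single (Finset.mem_erase.mpr ⟨h, hab⟩)
          simpa using rel_lift id gen (hconn a haK b hbK)
        have hvne₁ : (verts K₁).Nonempty := by
          refine ⟨u, mem_verts'.mpr ⟨{u}, Finset.mem_erase.mpr ⟨fun h => ?_, huK⟩, by simp⟩⟩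
          have := h ▸ hec
          simp at this
        obtain ⟨F, hFK, hFe, hcol⟩ := ih K₁ hcard₁ hK₁c h2₁ hvne₁ hconn₁
        refine ⟨insert e F, ?_, ?_, ?_⟩
        · exact Finset.insert_subset heK (hFK.trans hsubK₁)
        · intro f hf
          rcases Finset.mem_insert.mp hf with rfl | hf'
          · exact hec
          · exact hFe f hf'
        · have : K \ insert e F = K₁ \ F := by
            ext σ
            simp only [Finset.mem_sdiff, Finset.mem_insert, hK₁def, Finset.mem_erase, not_or]
            tauto
          rw [this]; exact hcol
    · -- no edges at all
      push_neg at hedge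
      obtain ⟨w, hw⟩ := hvne
      have hwK : ({w} : Finset V) ∈ K := singleton_mem_of_verts hK hw
      have hrel_eq : ∀ a b : V,
          Relation.ReflTransGen (fun a b => ({a, b} : Finset V) ∈ K) a b → a = b := by
        intro a b h
        induction h with
        | refl => rfl
        | tail _ hbc ihh =>
          rename_i b' c' _
          by_cases hbc' : b' = c'
          · exact ihh.trans hbc'
          · exact absurd (Finset.card_pair hbc') (hedge _ hbc)
      have hKeq : K = ({∅, {w}} : Finset (Finset V)) := by
        ext σ
        simp only [Finset.mem_insert, Finset.mem_singleton]
        constructor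
        · intro hσ
          have hc : σ.card ≤ 1 := by
            have := h2 σ hσ
            have := hedge σ hσ
            omega
          rcases Nat.lt_or_ge σ.card 1 with h | h
          · left
            exact Finset.card_eq_zero.mp (by omega)
          · right
            obtain ⟨y, hy⟩ := Finset.card_eq_one.mp (le_antisymm hc h)
            have hyv : y ∈ verts K := mem_verts'.mpr ⟨σ, hσ, by rw [hy]; simp⟩
            rw [hy, hrel_eq y w (hconn y hyv w hw)]
        · rintro (rfl | rfl)
          · exact hK _ hwK ∅ (Finset.empty_subset _)
          · exact hwK
      refine ⟨∅, Finset.empty_subset _, by simp, w, ?_⟩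
      rw [Finset.sdiff_empty, hKeq]
      exact Relation.ReflTransGen.refl

lemma elemCollapse_conn {K K' : Finset (Finset V)} (h : ElemCollapse K K')
    (hK : IsCplx K) (h2 : ∀ σ ∈ K, σ.card ≤ 2) :
    IsCplx K' ∧ (∀ σ ∈ K', σ.card ≤ 2) ∧ (Conn K' → Conn K) := by
  obtain ⟨σ, hσK, τ, hτK, hst, huni, rfl⟩ := h
  have hsub : ((K.erase σ).erase τ) ⊆ K :=
    (Finset.erase_subset _ _).trans (Finset.erase_subset _ _)
  have hcplx' : IsCplx ((K.erase σ).erase τ) := by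
    intro ρ hρ π hπ
    obtain ⟨hρτ, hρσ, hρK⟩ : ρ ≠ τ ∧ ρ ≠ σ ∧ ρ ∈ K := by
      simpa [Finset.mem_erase, and_assoc] using hρ
    have hπK : π ∈ K := hK ρ hρK π hπ
    refine Finset.mem_erase.mpr ⟨?_, Finset.mem_erase.mpr ⟨?_, hπK⟩⟩
    · rintro rfl
      exact hρτ (huni ρ hρK (lt_of_lt_of_le hst hπ))
    · rintro rfl
      exact hρτ (huni ρ hρK (lt_of_le_of_ne hπ (Ne.symm hρσ)))
  refine ⟨hcplx', fun ρ hρ => h2 ρ (hsub hρ), ?_⟩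
  intro hconn'
  have hcs : σ.card ≤ 1 := by
    have h1 := Finset.card_lt_card hst
    have h2' := h2 τ hτK
    omega
  rcases Nat.lt_or_ge σ.card 1 with hc0 | hc1
  · -- σ = ∅ : then every nonempty face equals τ, and τ is a single vertex
    have hσe : σ = ∅ := Finset.card_eq_zero.mp (by omega)
    subst hσe
    have hall : ∀ ρ ∈ K, ρ ≠ ∅ → ρ = τ := by
      intro ρ hρ hne
      exact huni ρ hρ (Finset.empty_ssubset.mpr (Finset.nonempty_iff_ne_empty.mpr hne))
    have hτ1 : τ.card ≤ 1 := by
      by_contra hτ2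
      have hτc : τ.card = 2 := by have := h2 τ hτK; omega
      obtain ⟨c, d, hcd, hτeq⟩ := Finset.card_eq_two.mp hτc
      have hcK : ({c} : Finset V) ∈ K := singleton_mem hK hτK (by rw [hτeq]; simp)
      have hceq := hall {c} hcK (by simp)
      rw [← hceq] at hτeq
      have : d ∈ ({c} : Finset V) := by rw [hτeq]; simp
      have hdc : d = c := by simpa using this
      exact hcd hdc.symm
    intro a ha b hb
    obtain ⟨ρa, hρa, haρ⟩ := mem_verts'.mp ha
    obtain ⟨ρb, hρb, hbρ⟩ := mem_verts'.mp hb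
    have h1 : a ∈ τ := (hall ρa hρa (Finset.nonempty_iff_ne_empty.mp ⟨a, haρ⟩)) ▸ haρ
    have h2'' : b ∈ τ := (hall ρb hρb (Finset.nonempty_iff_ne_empty.mp ⟨b, hbρ⟩)) ▸ hbρ
    rw [Finset.card_le_one.mp hτ1 a h1 b h2'']
  · -- σ = {v}
    obtain ⟨v, hσv⟩ := Finset.card_eq_one.mp (le_antisymm hcs hc1)
    subst hσv
    have hτc : τ.card = 2 := by
      have h1 := Finset.card_lt_card hst
      have h2' := h2 τ hτK
      simp only [Finset.card_singleton] at h1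
      omega
    obtain ⟨c, d, hcd, hτeq⟩ := Finset.card_eq_two.mp hτc
    have hvτ : v ∈ τ := hst.1 (by simp)
    obtain ⟨u, hvu, hτeq'⟩ : ∃ u, v ≠ u ∧ τ = ({v, u} : Finset V) := by
      have : v = c ∨ v = d := by rw [hτeq] at hvτ; simpa using hvτ
      rcases this with rfl | rfl
      · exact ⟨d, hcd, hτeq⟩
      · exact ⟨c, fun h => hcd h.symm, by rw [hτeq, Finset.pair_comm]⟩
    have hdeg : Deg1 K v u := by
      intro ρ hρ hvρ
      by_cases hρv : ρ = {v}
      · exact Or.inl hρv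
      · right
        rw [← hτeq']
        exact huni ρ hρ (lt_of_le_of_ne (Finset.singleton_subset_iff.mpr hvρ)
          (Ne.symm hρv))
    have hfeq : (K.erase {v}).erase τ = K.filter (v ∉ ·) := by
      ext ρ
      simp only [Finset.mem_erase, Finset.mem_filter]
      constructor
      · rintro ⟨hρτ, hρσ, hρK⟩
        refine ⟨hρK, fun hvρ => ?_⟩
        rcases hdeg ρ hρK hvρ with h | h
        · exact hρσ h
        · exact hρτ (h.trans hτeq'.symm)
      · rintro ⟨hρK, hρv⟩
        refine ⟨fun h => hρv ?_, fun h => hρv (by rw [h]; simp), hρK⟩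
        rw [h, hτeq']; simp
    rw [hfeq] at hconn'
    exact conn_of_deg1 hK hdeg hvu (hτeq' ▸ hτK) hconn'

lemma conn_of_collapsible {K : Finset (Finset V)} (hK : IsCplx K)
    (h2 : ∀ σ ∈ K, σ.card ≤ 2) (hc : Collapsible K) : Conn K := by
  obtain ⟨w, hw⟩ := hc
  have H : ∀ (X : Finset (Finset V)), CollapsesTo X ({∅, {w}} : Finset (Finset V)) →
      IsCplx X → (∀ σ ∈ X, σ.card ≤ 2) → Conn X := by
    intro X hX
    induction hX using Relation.ReflTransGen.head_induction_on with
    | refl =>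
      intro _ _ a ha b hb
      have hvw : ∀ x ∈ verts ({∅, {w}} : Finset (Finset V)), x = w := by
        intro x hx
        obtain ⟨ρ, hρ, hxρ⟩ := mem_verts'.mp hx
        have hρ' : ρ = ∅ ∨ ρ = {w} := by simpa using hρ
        rcases hρ' with rfl | rfl
        · simp at hxρ
        · simpa using hxρ
      rw [hvw a ha, hvw b hb]
    | head hstep _ ihh =>
      intro hX h2X
      obtain ⟨hY, h2Y, himp⟩ := elemCollapse_conn hstep hX h2X
      exact himp (ihh hY h2Y)
  exact H K hw hK h2


/-- A nonempty pure `1`-dimensional complex satisfies the (RC)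
condition iff it is connected. -/
theorem RC_iff_connected {V : Type*} [DecidableEq V] (K : Finset (Finset V))
    (hK : IsCplx K) (hpure : PureDim K 1) :
    RC K ↔ ∀ u ∈ verts K, ∀ v ∈ verts K,
      Relation.ReflTransGen (fun a b => ({a, b} : Finset V) ∈ K) u v := by
  have h2 : ∀ σ ∈ K, σ.card ≤ 2 := by
    intro σ hσ
    have := hpure.2.1 σ hσ
    exact_mod_cast this
  constructor
  · rintro (rfl | ⟨F, hF, hcol⟩)
    · obtain ⟨σ, hσ⟩ := hpure.1
      simp at hσ
    · have hKF : K \ F ⊆ K := Finset.sdiff_subset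
      have hcplx' : IsCplx (K \ F) := by
        intro σ hσ τ hτ
        obtain ⟨hσK, hσF⟩ := Finset.mem_sdiff.mp hσ
        have hτK := hK σ hσK τ hτ
        refine Finset.mem_sdiff.mpr ⟨hτK, fun hτF => ?_⟩
        have hmax := (Finset.mem_filter.mp (hF hτF)).2
        exact hσF ((hmax σ hσK hτ) ▸ hτF)
      have hconn' := conn_of_collapsible hcplx' (fun σ hσ => h2 σ (hKF hσ)) hcol
      intro u hu v hv
      have key : ∀ x, x ∈ verts K → x ∈ verts (K \ F) := by
        intro x hx
        have hxK : ({x} : Finset V) ∈ K := singleton_mem_of_verts hK hx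
        have hxF : ({x} : Finset V) ∉ F := by
          intro hxF
          have hmax := (Finset.mem_filter.mp (hF hxF)).2
          obtain ⟨τ, hτK, hsub, hτc⟩ := hpure.2.2 {x} hxK
          have hxτ := hmax τ hτK hsub
          rw [← hxτ] at hτc
          simp at hτc
        exact mem_verts'.mpr ⟨{x}, Finset.mem_sdiff.mpr ⟨hxK, hxF⟩, by simp⟩
      exact rel_mono hKF (hconn' u (key u hu) v (key v hv))
  · intro hconn
    right
    have hvne : (verts K).Nonempty := by
      obtain ⟨σ, hσ⟩ := hpure.1
      obtain ⟨τ, hτK, _, hτc⟩ := hpure.2.2 σ hσ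
      have hτne : τ.Nonempty := by
        rw [← Finset.card_pos]
        have : τ.card = 2 := by exact_mod_cast hτc
        omega
      obtain ⟨x, hx⟩ := hτne
      exact ⟨x, mem_verts'.mpr ⟨τ, hτK, hx⟩⟩
    obtain ⟨F, hFK, hFe, hcol⟩ := main_exists_F K.card K le_rfl hK h2 hvne hconn
    refine ⟨F, ?_, hcol⟩
    intro f hf
    refine Finset.mem_filter.mpr ⟨hFK hf, ?_⟩
    intro τ hτK hsub
    exact Finset.eq_of_subset_of_card_le hsub (by rw [hFe f hf]; exact h2 τ hτK)



end Paper
end
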